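/- Fix r > 0 and define F_r(d) = 1 − 2Φ(−r/d) − (2d/(√(2π)·r))·(1 − exp(−(r/d)²/2)) for d > 0, where Φ(x) = ∫_{−∞}^{x} (1/√(2π))·exp(−t²/2) dt is the standard normal cumulative distribution function. Let c, U, S₀, u_{j−1}, u_j be real numbers and m a positive integer with 0 < c < 1, U > 0, S₀ > 0, 0 < u_{j−1} ≤ u_j ≤ S₀, and 1 + m/4 − 2US₀ > 0. Define ρ = log F_r(√(1 + m/4 − 2US₀ + (US₀)^{2^{m+1}})) / log F_r(√(1 + m/4 − 2cUS₀)) and ρ_j = log F_r(√(1 + m/4 − 2US₀ + (Uu_j)^{2^{m+1}})) / log F_r(√(1 + m/4 − 2cUS₀ + (Uu_{j−1})^{2^{m+1}})). Then ρ_j < ρ. -/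

import Mathlib

open MeasureTheory

/-- The standard normal cumulative distribution function. -/
noncomputable def Phi (x : ℝ) : ℝ :=
  ∫ t in Set.Iic x, (1 / Real.sqrt (2 * Real.pi)) * Real.exp (-t ^ 2 / 2)

/-- The collision probability of the L2 LSH `h(x) = ⌊(aᵀx + b)/r⌋` at distance `d`. -/
noncomputable def Fcol (r d : ℝ) : ℝ :=
  1 - 2 * Phi (-r / d) - (2 * d / (Real.sqrt (2 * Real.pi) * r)) *
    (1 - Real.exp (-(r / d) ^ 2 / 2))

noncomputable def phi (t : ℝ) : ℝ := (1 / Real.sqrt (2 * Real.pi)) * Real.exp (-t ^ 2 / 2)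

lemma phi_pos (t : ℝ) : 0 < phi t := by unfold phi; positivity

lemma phi_cont : Continuous phi := by unfold phi; fun_prop

lemma phi_integrable : Integrable phi := by
  have h : phi = fun t => (1 / Real.sqrt (2 * Real.pi)) * Real.exp (-(1/2) * t ^ 2) := by
    funext t; unfold phi; ring_nf
  rw [h]
  exact (integrable_exp_neg_mul_sq (by norm_num : (0:ℝ) < 1/2)).const_mul _

lemma phi_total : ∫ t, phi t = 1 := by
  unfold phi
  rw [MeasureTheory.integral_const_mul]
  have : (fun t : ℝ => Real.exp (-t ^ 2 / 2)) = fun t => Real.exp (-(1/2) * t ^ 2) := by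
    funext t; ring_nf
  rw [this, integral_gaussian]
  rw [one_div, inv_mul_eq_div, div_eq_one_iff_eq (by positivity)]
  norm_num
  ring




lemma Phi_eq (x : ℝ) : Phi x = ∫ t in Set.Iic x, phi t := rfl

lemma Phi_sub (a b : ℝ) : Phi b - Phi a = ∫ t in a..b, phi t := by
  rw [Phi_eq, Phi_eq]
  exact intervalIntegral.integral_Iic_sub_Iic phi_integrable.integrableOn
    phi_integrable.integrableOn

lemma Phi_nonneg (x : ℝ) : 0 ≤ Phi x := by
  rw [Phi_eq]
  exact setIntegral_nonneg measurableSet_Iic fun t _ => (phi_pos t).le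

lemma Phi_pos (x : ℝ) : 0 < Phi x := by
  have h1 : Phi x - Phi (x - 1) = ∫ t in (x-1)..x, phi t := Phi_sub _ _
  have h2 : 0 < ∫ t in (x-1)..x, phi t := by
    apply intervalIntegral.intervalIntegral_pos_of_pos_on
      (phi_cont.intervalIntegrable _ _) (fun t _ => phi_pos t) (by linarith)
  have := Phi_nonneg (x - 1)
  linarith

lemma Phi_zero : Phi 0 = 1 / 2 := by
  have hsym : Phi 0 = ∫ t in Set.Ioi (0:ℝ), phi t := by
    rw [Phi_eq]
    have : ∫ t in Set.Iic (0:ℝ), phi t = ∫ t in Set.Iic (0:ℝ), phi (-t) := by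
      apply setIntegral_congr_fun measurableSet_Iic
      intro t _
      unfold phi; norm_num
    rw [this, integral_comp_neg_Iic, neg_zero]
  have hadd : Phi 0 + ∫ t in Set.Ioi (0:ℝ), phi t = 1 := by
    rw [Phi_eq, intervalIntegral.integral_Iic_add_Ioi phi_integrable.integrableOn
      phi_integrable.integrableOn, phi_total]
  rw [hsym] at hadd ⊢
  linarith

lemma integral_s_exp (R : ℝ) :
    ∫ s in (0:ℝ)..R, s * Real.exp (-s ^ 2 / 2) = 1 - Real.exp (-R ^ 2 / 2) := by
  have hD : ∀ s : ℝ, HasDerivAt (fun u : ℝ => -Real.exp (-u ^ 2 / 2))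
      (s * Real.exp (-s ^ 2 / 2)) s := by
    intro s
    have h1 : HasDerivAt (fun u : ℝ => -u ^ 2 / 2) (-s) s := by
      have := ((hasDerivAt_pow 2 s).neg).div_const 2
      simpa using this.congr_deriv (by ring)
    have := (h1.exp).neg
    exact this.congr_deriv (by ring)
  have := intervalIntegral.integral_eq_sub_of_hasDerivAt
    (fun s _ => hD s)
    ((continuous_id.mul (by fun_prop)).intervalIntegrable 0 R)
  rw [this]
  norm_num
  ring

/-- The single-variable collision function. -/
noncomputable def G (R : ℝ) : ℝ :=
  1 - 2 * Phi (-R) - 2 / (Real.sqrt (2 * Real.pi) * R) * (1 - Real.exp (-R ^ 2 / 2))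

lemma G_rep {R : ℝ} (hR : 0 < R) :
    G R = 2 * ∫ s in (0:ℝ)..R, phi s * (1 - s / R) := by
  have h1 : 1 - 2 * Phi (-R) = 2 * ∫ s in (0:ℝ)..R, phi s := by
    have hs : Phi 0 - Phi (-R) = ∫ t in (-R)..(0:ℝ), phi t := Phi_sub _ _
    have hcn : ∫ s in (0:ℝ)..R, phi (-s) = ∫ t in (-R)..(0:ℝ), phi t := by
      simpa using intervalIntegral.integral_comp_neg (a := (0:ℝ)) (b := R) phi
    have heven : ∫ s in (0:ℝ)..R, phi (-s) = ∫ s in (0:ℝ)..R, phi s := by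
      apply intervalIntegral.integral_congr
      intro s _
      unfold phi; norm_num
    rw [Phi_zero] at hs
    rw [← heven, hcn, ← hs]; ring
  have hne : Real.sqrt (2 * Real.pi) ≠ 0 := by positivity
  have h2 : 2 / (Real.sqrt (2 * Real.pi) * R) * (1 - Real.exp (-R ^ 2 / 2))
      = 2 * ∫ s in (0:ℝ)..R, phi s * (s / R) := by
    have key : ∀ s : ℝ, phi s * (s / R) =
        (1 / (Real.sqrt (2 * Real.pi) * R)) * (s * Real.exp (-s ^ 2 / 2)) := by
      intro s; unfold phi; field_simp
    rw [intervalIntegral.integral_congr (g := fun s =>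
        (1 / (Real.sqrt (2 * Real.pi) * R)) * (s * Real.exp (-s ^ 2 / 2)))
        (fun s _ => key s),
      intervalIntegral.integral_const_mul, integral_s_exp R]
    field_simp
  have h3 : ∀ s : ℝ, phi s * (1 - s / R) = phi s - phi s * (s / R) := by
    intro s; ring
  have hint1 : IntervalIntegrable phi volume 0 R := phi_cont.intervalIntegrable 0 R
  have hint2 : IntervalIntegrable (fun s => phi s * (s / R)) volume 0 R :=
    (phi_cont.mul (by fun_prop)).intervalIntegrable 0 R
  calc G R = (1 - 2 * Phi (-R)) -
      2 / (Real.sqrt (2 * Real.pi) * R) * (1 - Real.exp (-R ^ 2 / 2)) := by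
        unfold G; ring
    _ = 2 * ((∫ s in (0:ℝ)..R, phi s) - ∫ s in (0:ℝ)..R, phi s * (s / R)) := by
        rw [h1, h2]; ring
    _ = 2 * ∫ s in (0:ℝ)..R, (phi s - phi s * (s / R)) := by
        rw [intervalIntegral.integral_sub hint1 hint2]
    _ = 2 * ∫ s in (0:ℝ)..R, phi s * (1 - s / R) := by
        congr 1
        exact intervalIntegral.integral_congr (fun s _ => (h3 s).symm)

lemma G_pos {R : ℝ} (hR : 0 < R) : 0 < G R := by
  rw [G_rep hR]
  have : 0 < ∫ s in (0:ℝ)..R, phi s * (1 - s / R) := by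
    apply intervalIntegral.intervalIntegral_pos_of_pos_on
      ((phi_cont.mul (by fun_prop)).intervalIntegrable 0 R)
      (fun s hs => ?_) hR
    have h1 : s / R < 1 := (div_lt_one hR).mpr hs.2
    have := phi_pos s
    show 0 < phi s * (1 - s / R)
    nlinarith
  linarith

lemma G_lt_one {R : ℝ} (hR : 0 < R) : G R < 1 := by
  unfold G
  have h1 : 0 < Phi (-R) := Phi_pos _
  have h2 : 0 < 2 / (Real.sqrt (2 * Real.pi) * R) := by positivity
  have h3 : 0 < 1 - Real.exp (-R ^ 2 / 2) := by
    have : Real.exp (-R ^ 2 / 2) < 1 := by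
      rw [Real.exp_lt_one_iff]
      nlinarith
    linarith
  nlinarith

lemma G_strictMono {R₁ R₂ : ℝ} (h1 : 0 < R₁) (h2 : R₁ < R₂) : G R₁ < G R₂ := by
  rw [G_rep h1, G_rep (h1.trans h2)]
  have hsplit : ∫ s in (0:ℝ)..R₂, phi s * (1 - s / R₂)
      = (∫ s in (0:ℝ)..R₁, phi s * (1 - s / R₂))
        + ∫ s in R₁..R₂, phi s * (1 - s / R₂) := by
    rw [intervalIntegral.integral_add_adjacent_intervals
      ((show Continuous (fun s => phi s * (1 - s / R₂)) from
        phi_cont.mul (g := fun s => 1 - s / R₂) (by fun_prop)).intervalIntegrable 0 R₁)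
      ((show Continuous (fun s => phi s * (1 - s / R₂)) from
        phi_cont.mul (g := fun s => 1 - s / R₂) (by fun_prop)).intervalIntegrable R₁ R₂)]
  have hA : (∫ s in (0:ℝ)..R₁, phi s * (1 - s / R₁))
      < ∫ s in (0:ℝ)..R₁, phi s * (1 - s / R₂) := by
    have hpos : 0 < (∫ s in (0:ℝ)..R₁, phi s * (1 - s / R₂))
        - ∫ s in (0:ℝ)..R₁, phi s * (1 - s / R₁) := by
      rw [← intervalIntegral.integral_sub
        ((show Continuous (fun s => phi s * (1 - s / R₂)) from
          phi_cont.mul (g := fun s => 1 - s / R₂) (by fun_prop)).intervalIntegrable 0 R₁)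
        ((show Continuous (fun s => phi s * (1 - s / R₁)) from
          phi_cont.mul (g := fun s => 1 - s / R₁) (by fun_prop)).intervalIntegrable 0 R₁)]
      apply intervalIntegral.intervalIntegral_pos_of_pos_on
        (((phi_cont.mul (by fun_prop)).sub
          (phi_cont.mul (by fun_prop))).intervalIntegrable 0 R₁)
        (fun s hs => ?_) h1
      have := phi_pos s
      have hlt : s / R₂ < s / R₁ := by
        apply div_lt_div_of_pos_left hs.1 h1 h2
      show 0 < phi s * (1 - s / R₂) - phi s * (1 - s / R₁)
      nlinarith
    linarith
  have hB : 0 ≤ ∫ s in R₁..R₂, phi s * (1 - s / R₂) := by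
    apply intervalIntegral.integral_nonneg h2.le
    intro s hs
    have := phi_pos s
    have : s / R₂ ≤ 1 := by
      apply div_le_one_of_le₀ hs.2
      linarith
    nlinarith [phi_pos s]
  linarith




lemma Fcol_eq_G {r d : ℝ} (hr : 0 < r) (hd : 0 < d) : Fcol r d = G (r / d) := by
  unfold Fcol G
  rw [neg_div]
  congr 1
  have hne : Real.sqrt (2 * Real.pi) ≠ 0 := by positivity
  field_simp

lemma Fcol_pos {r d : ℝ} (hr : 0 < r) (hd : 0 < d) : 0 < Fcol r d := by
  rw [Fcol_eq_G hr hd]; exact G_pos (by positivity)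

lemma Fcol_lt_one {r d : ℝ} (hr : 0 < r) (hd : 0 < d) : Fcol r d < 1 := by
  rw [Fcol_eq_G hr hd]; exact G_lt_one (by positivity)

lemma Fcol_strictAnti {r d₁ d₂ : ℝ} (hr : 0 < r) (hd₁ : 0 < d₁) (h : d₁ < d₂) :
    Fcol r d₂ < Fcol r d₁ := by
  rw [Fcol_eq_G hr hd₁, Fcol_eq_G hr (hd₁.trans h)]
  have hd₂ : 0 < d₂ := hd₁.trans h
  exact G_strictMono (by positivity) (div_lt_div_of_pos_left hr hd₁ h)

/-- Norm-range partitioning improves the L2-ALSH exponent: restricting to a sub-dataset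
whose 2-norms lie in `(u_{j-1}, u_j]` with `0 < u_{j-1} ≤ u_j ≤ S₀` yields `ρ_j < ρ`. -/
theorem l2alsh_range_smaller_rho (r c U S₀ u₀ u₁ : ℝ) (m : ℕ)
    (hr : 0 < r) (hc0 : 0 < c) (hc1 : c < 1) (hU : 0 < U) (hS₀ : 0 < S₀)
    (hm : 0 < m) (hu₀ : 0 < u₀) (hu₀u₁ : u₀ ≤ u₁) (hu₁ : u₁ ≤ S₀)
    (hpos : 0 < 1 + (m : ℝ) / 4 - 2 * U * S₀)
    (ρ ρj : ℝ)
    (hρ : ρ = Real.log (Fcol r (Real.sqrt (1 + (m : ℝ) / 4 - 2 * U * S₀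
            + (U * S₀) ^ (2 ^ (m + 1))))) /
          Real.log (Fcol r (Real.sqrt (1 + (m : ℝ) / 4 - 2 * c * U * S₀))))
    (hρj : ρj = Real.log (Fcol r (Real.sqrt (1 + (m : ℝ) / 4 - 2 * U * S₀
            + (U * u₁) ^ (2 ^ (m + 1))))) /
          Real.log (Fcol r (Real.sqrt (1 + (m : ℝ) / 4 - 2 * c * U * S₀
            + (U * u₀) ^ (2 ^ (m + 1)))))) :
    ρj < ρ := by
  set N := 2 ^ (m + 1) with hN
  set a := 1 + (m : ℝ) / 4 - 2 * U * S₀ + (U * S₀) ^ N with ha_def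
  set aj := 1 + (m : ℝ) / 4 - 2 * U * S₀ + (U * u₁) ^ N with haj_def
  set B := 1 + (m : ℝ) / 4 - 2 * c * U * S₀ with hB_def
  set bj := 1 + (m : ℝ) / 4 - 2 * c * U * S₀ + (U * u₀) ^ N with hbj_def
  have hUu₀ : 0 < U * u₀ := by positivity
  have hUu₁ : 0 ≤ U * u₁ := by nlinarith
  have hUu₁S : U * u₁ ≤ U * S₀ := by nlinarith
  have hpow1 : (0:ℝ) < (U * u₀) ^ N := pow_pos hUu₀ N
  have hpow2 : (U * u₁) ^ N ≤ (U * S₀) ^ N := pow_le_pow_left₀ hUu₁ hUu₁S N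
  have haj_pos : 0 < aj := by
    have : (0:ℝ) ≤ (U * u₁) ^ N := pow_nonneg hUu₁ N
    rw [haj_def]; linarith
  have ha_pos : 0 < a := by
    have : (0:ℝ) ≤ (U * S₀) ^ N := pow_nonneg (by positivity) N
    rw [ha_def]; linarith
  have hB_pos : 0 < B := by rw [hB_def]; nlinarith
  have hbj_pos : 0 < bj := by rw [hbj_def]; nlinarith
  have haj_le_a : aj ≤ a := by rw [haj_def, ha_def]; linarith
  have hB_lt_bj : B < bj := by rw [hB_def, hbj_def]; linarith
  -- square roots
  have hsa : 0 < Real.sqrt a := Real.sqrt_pos.mpr ha_pos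
  have hsaj : 0 < Real.sqrt aj := Real.sqrt_pos.mpr haj_pos
  have hsB : 0 < Real.sqrt B := Real.sqrt_pos.mpr hB_pos
  have hsbj : 0 < Real.sqrt bj := Real.sqrt_pos.mpr hbj_pos
  have hsaj_le : Real.sqrt aj ≤ Real.sqrt a := Real.sqrt_le_sqrt haj_le_a
  have hsB_lt : Real.sqrt B < Real.sqrt bj := Real.sqrt_lt_sqrt hB_pos.le hB_lt_bj
  -- F values
  have hFa_pos : 0 < Fcol r (Real.sqrt a) := Fcol_pos hr hsa
  have hFa_lt1 : Fcol r (Real.sqrt a) < 1 := Fcol_lt_one hr hsa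
  have hFaj_pos : 0 < Fcol r (Real.sqrt aj) := Fcol_pos hr hsaj
  have hFaj_lt1 : Fcol r (Real.sqrt aj) < 1 := Fcol_lt_one hr hsaj
  have hFB_pos : 0 < Fcol r (Real.sqrt B) := Fcol_pos hr hsB
  have hFB_lt1 : Fcol r (Real.sqrt B) < 1 := Fcol_lt_one hr hsB
  have hFbj_pos : 0 < Fcol r (Real.sqrt bj) := Fcol_pos hr hsbj
  have hFbj_lt1 : Fcol r (Real.sqrt bj) < 1 := Fcol_lt_one hr hsbj
  have hFle : Fcol r (Real.sqrt a) ≤ Fcol r (Real.sqrt aj) := by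
    rcases lt_or_eq_of_le hsaj_le with h | h
    · exact (Fcol_strictAnti hr hsaj h).le
    · rw [h]
  have hFlt : Fcol r (Real.sqrt bj) < Fcol r (Real.sqrt B) := Fcol_strictAnti hr hsB hsB_lt
  -- logs
  have hlFa : Real.log (Fcol r (Real.sqrt a)) < 0 := Real.log_neg hFa_pos hFa_lt1
  have hlFB : Real.log (Fcol r (Real.sqrt B)) < 0 := Real.log_neg hFB_pos hFB_lt1
  have hlog1 : Real.log (Fcol r (Real.sqrt a)) ≤ Real.log (Fcol r (Real.sqrt aj)) :=
    Real.log_le_log hFa_pos hFle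
  have hlog2 : Real.log (Fcol r (Real.sqrt bj)) < Real.log (Fcol r (Real.sqrt B)) :=
    Real.log_lt_log hFbj_pos hFlt
  rw [hρ, hρj]
  rw [show Real.log (Fcol r (Real.sqrt aj)) / Real.log (Fcol r (Real.sqrt bj))
      = (-Real.log (Fcol r (Real.sqrt aj))) / (-Real.log (Fcol r (Real.sqrt bj))) from
      (neg_div_neg_eq _ _).symm,
    show Real.log (Fcol r (Real.sqrt a)) / Real.log (Fcol r (Real.sqrt B))
      = (-Real.log (Fcol r (Real.sqrt a))) / (-Real.log (Fcol r (Real.sqrt B))) from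
      (neg_div_neg_eq _ _).symm]
  have hbjneg : 0 < -Real.log (Fcol r (Real.sqrt bj)) := by linarith
  calc (-Real.log (Fcol r (Real.sqrt aj))) / (-Real.log (Fcol r (Real.sqrt bj)))
      ≤ (-Real.log (Fcol r (Real.sqrt a))) / (-Real.log (Fcol r (Real.sqrt bj))) := by
        gcongr
    _ < (-Real.log (Fcol r (Real.sqrt a))) / (-Real.log (Fcol r (Real.sqrt B))) :=
        div_lt_div_of_pos_left (by linarith) (by linarith) (by linarith)
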